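/- Let H = (V,E) be a finite contextuality scenario and 𝒮 ⊆ V a set of pairwise exclusive events. If p is an almost quantum model on H (there is a finite-dimensional Hilbert space, density operator ρ, and projections P_v with ∑_{v∈e} P_v ≤ 1 for all e ∈ E and p(v) = tr(P_v ρ)), then ∑_{v∈𝒮} p(v) ≤ 1. That is, almost quantum models satisfy all CE inequalities. -/

import Mathlib

open scoped ComplexOrder

open Matrix in
lemma proj_psd' {n : ℕ} {A : Matrix (Fin n) (Fin n) ℂ}
    (hh : A.IsHermitian) (h2 : A * A = A) : A.PosSemidef := by
  have h : A = Aᴴ * A := by rw [hh.eq, h2]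
  rw [h]; exact Matrix.posSemidef_conjTranspose_mul_self A

open Matrix in
lemma psd_sum' {n : ℕ} {ι : Type*} (s : Finset ι) (f : ι → Matrix (Fin n) (Fin n) ℂ)
    (h : ∀ i ∈ s, (f i).PosSemidef) : (∑ i ∈ s, f i).PosSemidef := by
  classical
  induction s using Finset.induction_on with
  | empty => simpa using Matrix.PosSemidef.zero
  | insert _ _ hni ih =>
    rw [Finset.sum_insert hni]
    exact (h _ (Finset.mem_insert_self _ _)).add
      (ih fun i hi => h i (Finset.mem_insert_of_mem hi))

open Matrix in
lemma herm_sum' {n : ℕ} {ι : Type*} (s : Finset ι) (f : ι → Matrix (Fin n) (Fin n) ℂ)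
    (h : ∀ i ∈ s, (f i).IsHermitian) : (∑ i ∈ s, f i).IsHermitian := by
  classical
  induction s using Finset.induction_on with
  | empty => simp
  | insert _ _ hni ih =>
    rw [Finset.sum_insert hni]
    exact (h _ (Finset.mem_insert_self _ _)).add
      (ih fun i hi => h i (Finset.mem_insert_of_mem hi))

open Matrix in
lemma trace_mul_psd_nonneg' {n : ℕ} {A B : Matrix (Fin n) (Fin n) ℂ}
    (hA : A.PosSemidef) (hB : B.PosSemidef) : 0 ≤ (A * B).trace := by
  obtain ⟨C, hC⟩ : ∃ C : Matrix (Fin n) (Fin n) ℂ, A = Cᴴ * C := by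
    open scoped MatrixOrder in exact CStarAlgebra.nonneg_iff_eq_star_mul_self.mp hA.nonneg
  obtain ⟨D, hD⟩ : ∃ D : Matrix (Fin n) (Fin n) ℂ, B = Dᴴ * D := by
    open scoped MatrixOrder in exact CStarAlgebra.nonneg_iff_eq_star_mul_self.mp hB.nonneg
  have h : (A * B).trace = ((C * Dᴴ)ᴴ * (C * Dᴴ)).trace := by
    rw [hC, hD, conjTranspose_mul, conjTranspose_conjTranspose]
    rw [← Matrix.mul_assoc, Matrix.trace_mul_comm]
    simp [Matrix.mul_assoc]
  rw [h]
  rw [Matrix.trace]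
  refine Finset.sum_nonneg fun i _ => ?_
  simp only [Matrix.diag_apply, Matrix.mul_apply, Matrix.conjTranspose_apply]
  exact Finset.sum_nonneg fun j _ => star_mul_self_nonneg _

open Matrix in
lemma proj_orth' {n : ℕ} {P Q : Matrix (Fin n) (Fin n) ℂ}
    (hP : P.IsHermitian) (hP2 : P * P = P) (hQ : Q.IsHermitian) (hQ2 : Q * Q = Q)
    (h : ((1 : Matrix (Fin n) (Fin n) ℂ) - (P + Q)).PosSemidef) : P * Q = 0 := by
  have key : (P * Q)ᴴ * (P * Q) = Q * P * Q := by
    rw [conjTranspose_mul, hP.eq, hQ.eq]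
    calc Q * P * (P * Q) = Q * (P * P) * Q := by noncomm_ring
    _ = Q * P * Q := by rw [hP2]
  have h1 : (Qᴴ * ((1 : Matrix (Fin n) (Fin n) ℂ) - (P + Q)) * Q).PosSemidef :=
    h.conjTranspose_mul_mul_same Q
  have h2 : Qᴴ * ((1 : Matrix (Fin n) (Fin n) ℂ) - (P + Q)) * Q = -(Q * P * Q) := by
    rw [hQ.eq]
    have e1 : Q * ((1 : Matrix (Fin n) (Fin n) ℂ) - (P + Q)) * Q
        = Q * Q - (Q * P * Q + Q * Q * Q) := by noncomm_ring
    rw [e1, hQ2, hQ2]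
    abel
  rw [h2] at h1
  have hApsd : (Q * P * Q).PosSemidef := key ▸ Matrix.posSemidef_conjTranspose_mul_self (P * Q)
  have hzero : Q * P * Q = 0 := by
    have hx : ∀ x, (Q * P * Q) *ᵥ x = 0 := by
      intro x
      refine (hApsd.dotProduct_mulVec_zero_iff x).mp ?_
      have a := hApsd.dotProduct_mulVec_nonneg x
      have b := h1.dotProduct_mulVec_nonneg x
      rw [Matrix.neg_mulVec, dotProduct_neg] at b
      exact le_antisymm (neg_nonneg.mp b) a
    ext i j
    have := congr_fun (hx (Pi.single j 1)) i
    simpa [Matrix.mulVec_single] using this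
  have : (P * Q)ᴴ * (P * Q) = 0 := key.trans hzero
  exact Matrix.conjTranspose_mul_self_eq_zero.mp this

/-- Almost quantum models satisfy all CE inequalities. -/
theorem almost_quantum_model_satisfies_CE {V : Type*} [Fintype V] [DecidableEq V]
    (E : Finset (Finset V)) (S : Finset V)
    (hexc : ∀ u ∈ S, ∀ v ∈ S, u ≠ v → ∃ e ∈ E, u ∈ e ∧ v ∈ e)
    (n : ℕ) (ρ : Matrix (Fin n) (Fin n) ℂ)
    (hρ : ρ.PosSemidef) (htr : ρ.trace = 1)
    (P : V → Matrix (Fin n) (Fin n) ℂ)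
    (hPh : ∀ v, (P v).IsHermitian) (hP2 : ∀ v, P v * P v = P v)
    (hsub : ∀ e ∈ E, ((1 : Matrix (Fin n) (Fin n) ℂ) - ∑ v ∈ e, P v).PosSemidef)
    (p : V → ℝ) (hp : ∀ v, (p v : ℂ) = (P v * ρ).trace) :
    ∑ v ∈ S, p v ≤ 1 := by
  -- pairwise orthogonality
  have horth : ∀ u ∈ S, ∀ v ∈ S, u ≠ v → P u * P v = 0 := by
    intro u hu v hv huv
    obtain ⟨e, he, hue, hve⟩ := hexc u hu v hv huv
    have hveu : v ∈ e.erase u := Finset.mem_erase.mpr ⟨huv.symm, hve⟩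
    have hsplit : ∑ w ∈ e, P w
        = (P u + P v) + ∑ w ∈ (e.erase u).erase v, P w := by
      rw [← Finset.add_sum_erase _ _ hue, ← Finset.add_sum_erase _ _ hveu]
      abel
    have hpsd : ((1 : Matrix (Fin n) (Fin n) ℂ) - (P u + P v)).PosSemidef := by
      have h1 := hsub e he
      rw [hsplit] at h1
      have h2 := h1.add (psd_sum' ((e.erase u).erase v) P
        (fun w _ => proj_psd' (hPh w) (hP2 w)))
      have e2 : (1 : Matrix (Fin n) (Fin n) ℂ)
            - ((P u + P v) + ∑ w ∈ (e.erase u).erase v, P w)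
            + ∑ w ∈ (e.erase u).erase v, P w
          = (1 : Matrix (Fin n) (Fin n) ℂ) - (P u + P v) := by abel
      rwa [e2] at h2
    exact proj_orth' (hPh u) (hP2 u) (hPh v) (hP2 v) hpsd
  set Q : Matrix (Fin n) (Fin n) ℂ := ∑ v ∈ S, P v with hQdef
  have hQh : Q.IsHermitian := herm_sum' S P (fun v _ => hPh v)
  have hQ2 : Q * Q = Q := by
    rw [hQdef, Finset.sum_mul_sum]
    refine Finset.sum_congr rfl fun u hu => ?_
    rw [Finset.sum_eq_single u (fun v hv hvu => horth u hu v hv (Ne.symm hvu))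
      (fun h => absurd hu h)]
    exact hP2 u
  have h1Q : ((1 : Matrix (Fin n) (Fin n) ℂ) - Q).PosSemidef := by
    refine proj_psd' ?_ ?_
    · exact (Matrix.isHermitian_one).sub hQh
    · calc (1 - Q) * (1 - Q) = 1 - Q - Q + Q * Q := by noncomm_ring
      _ = 1 - Q := by rw [hQ2]; abel
  have htrace : (0 : ℂ) ≤ (((1 : Matrix (Fin n) (Fin n) ℂ) - Q) * ρ).trace :=
    trace_mul_psd_nonneg' h1Q hρ
  have hexpand : (((1 : Matrix (Fin n) (Fin n) ℂ) - Q) * ρ).trace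
      = 1 - ((∑ v ∈ S, p v : ℝ) : ℂ) := by
    rw [Matrix.sub_mul, Matrix.one_mul, Matrix.trace_sub, htr]
    congr 1
    rw [hQdef, Finset.sum_mul, Matrix.trace_sum]
    push_cast
    exact Finset.sum_congr rfl fun v _ => (hp v).symm
  rw [hexpand] at htrace
  have : ((0 : ℝ) : ℂ) ≤ ((1 - ∑ v ∈ S, p v : ℝ) : ℂ) := by push_cast; simpa using htrace
  have := Complex.real_le_real.mp this
  linarith
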